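/- For 0 ≤ i ≤ D, the eigenspace of the adjacency matrix A of Q_D for the eigenvalue D − 2i has dimension binom(D, i), and the vectors w_S with |S| = i form a basis of it. -/

import Mathlib

open Matrix BigOperators Finset

/-- Vertex set of the `D`-dimensional hypercube. -/
abbrev Vx (D : ℕ) := Fin D → Fin 2

/-- Number of coordinates at which `x` and `y` differ (Hamming distance). -/
def hamming {D : ℕ} (x y : Vx D) : ℕ :=
  (Finset.univ.filter (fun i => x i ≠ y i)).card

/-- Adjacency matrix of the hypercube `Q_D`. -/
noncomputable def adjA (D : ℕ) : Matrix (Vx D) (Vx D) ℝ :=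
  fun x y => if hamming x y = 1 then 1 else 0

/-- The `i`-adjacency matrix `α_i`. -/
noncomputable def alpha {D : ℕ} (i : Fin D) : Matrix (Vx D) (Vx D) ℝ :=
  fun x y => if (x i ≠ y i ∧ ∀ j, j ≠ i → x j = y j) then 1 else 0

/-- The diagonal matrix `α*_i` with `(x,x)`-entry `(-1)^(x_i)`. -/
noncomputable def alphaStar {D : ℕ} (i : Fin D) : Matrix (Vx D) (Vx D) ℝ :=
  Matrix.diagonal (fun x => (-1 : ℝ) ^ ((x i : ℕ)))

/-- `D`-fold tensor (Kronecker) product of `2×2` matrices, realized on index set `Vx D`. -/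
noncomputable def tensorMat {D : ℕ} (M : Fin D → Matrix (Fin 2) (Fin 2) ℝ) :
    Matrix (Vx D) (Vx D) ℝ :=
  fun x y => ∏ i, M i (x i) (y i)

/-- `D`-fold tensor product of vectors in `ℝ²`, realized in `ℝ^(Vx D)`. -/
noncomputable def tensorVec {D : ℕ} (f : Fin D → (Fin 2 → ℝ)) : Vx D → ℝ :=
  fun x => ∏ i, f i (x i)

/-- `u = (1/√2)(1,1)ᵗ`. -/
noncomputable def uvec : Fin 2 → ℝ := ![1 / Real.sqrt 2, 1 / Real.sqrt 2]

/-- `v = (1/√2)(1,-1)ᵗ`. -/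
noncomputable def vvec : Fin 2 → ℝ := ![1 / Real.sqrt 2, -(1 / Real.sqrt 2)]

/-- The vector `w_S`. -/
noncomputable def wS {D : ℕ} (S : Finset (Fin D)) : Vx D → ℝ :=
  tensorVec (fun i => if i ∈ S then vvec else uvec)

/-! ### Auxiliary development -/

noncomputable def fS {D : ℕ} (S : Finset (Fin D)) : Fin D → Fin 2 → ℝ :=
  fun i => if i ∈ S then vvec else uvec

lemma wS_eq {D : ℕ} (S : Finset (Fin D)) (x : Vx D) : wS S x = ∏ j, fS S j (x j) := rfl

lemma half_sq : (1 / Real.sqrt 2) * (1 / Real.sqrt 2) = 1 / 2 := by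
  rw [div_mul_div_comm, one_mul, Real.mul_self_sqrt (by norm_num)]

/-- Orthonormality of the `w_S`. -/
lemma wS_dot {D : ℕ} (S T : Finset (Fin D)) :
    ∑ x : Vx D, wS S x * wS T x = if S = T then 1 else 0 := by
  have key : ∑ x : Vx D, wS S x * wS T x
      = ∏ j : Fin D, ∑ a : Fin 2, fS S j a * fS T j a := by
    rw [Finset.prod_univ_sum (fun _ => (Finset.univ : Finset (Fin 2)))]
    rw [Fintype.piFinset_univ]
    refine Finset.sum_congr rfl fun x _ => ?_
    rw [wS_eq, wS_eq, ← Finset.prod_mul_distrib]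
  have hfac : ∀ j : Fin D, (∑ a : Fin 2, fS S j a * fS T j a)
      = if ((j ∈ S) ↔ (j ∈ T)) then 1 else 0 := by
    intro j
    rw [Fin.sum_univ_two]
    have h2 : (Real.sqrt 2)⁻¹ * (Real.sqrt 2)⁻¹ = 1 / 2 := by
      rw [← mul_inv, Real.mul_self_sqrt (by norm_num : (0:ℝ) ≤ 2)]
      norm_num
    by_cases hs : j ∈ S <;> by_cases ht : j ∈ T <;>
      simp [fS, hs, ht, uvec, vvec] <;>
      rw [h2] <;> norm_num
  rw [key]
  by_cases hST : S = T
  · subst hST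
    simp [hfac]
  · have : ∃ j, ¬((j ∈ S) ↔ (j ∈ T)) := by
      by_contra h
      push_neg at h
      exact hST (Finset.ext fun j => h j)
    obtain ⟨j, hj⟩ := this
    rw [if_neg hST]
    exact Finset.prod_eq_zero (Finset.mem_univ j) (by rw [hfac, if_neg hj])

/-- Flip the `k`-th coordinate. -/
def flipv {D : ℕ} (x : Vx D) (k : Fin D) : Vx D := Function.update x k (x k + 1)

lemma fin2_add_one_ne : ∀ a : Fin 2, a + 1 ≠ a := by decide

lemma fin2_ne_iff : ∀ a b : Fin 2, a ≠ b ↔ b = a + 1 := by decide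

lemma flipv_apply_self {D : ℕ} (x : Vx D) (k : Fin D) : flipv x k k = x k + 1 := by
  simp [flipv]

lemma flipv_apply_ne {D : ℕ} (x : Vx D) {k j : Fin D} (h : j ≠ k) : flipv x k j = x j := by
  simp [flipv, Function.update_of_ne h]

lemma filter_flipv {D : ℕ} (x : Vx D) (k : Fin D) :
    Finset.univ.filter (fun j => x j ≠ flipv x k j) = {k} := by
  ext j
  simp only [Finset.mem_filter, Finset.mem_univ, true_and, Finset.mem_singleton]
  constructor
  · intro h
    by_contra hjk
    exact h (flipv_apply_ne x hjk).symm
  · rintro rfl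
    rw [flipv_apply_self]
    exact (fin2_add_one_ne (x j)).symm

lemma hamming_flipv {D : ℕ} (x : Vx D) (k : Fin D) : hamming x (flipv x k) = 1 := by
  rw [hamming, filter_flipv]; rfl

lemma flipv_injective {D : ℕ} (x : Vx D) : Function.Injective (flipv x) := by
  intro k k' h
  by_contra hne
  have h1 : flipv x k k = x k + 1 := flipv_apply_self x k
  have h2 : flipv x k' k = x k := flipv_apply_ne x hne
  rw [h] at h1
  rw [h2] at h1
  exact fin2_add_one_ne (x k) h1.symm

lemma filter_hamming_eq {D : ℕ} (x : Vx D) :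
    Finset.univ.filter (fun y => hamming x y = 1) = Finset.univ.image (flipv x) := by
  ext y
  simp only [Finset.mem_filter, Finset.mem_univ, true_and, Finset.mem_image]
  constructor
  · intro h
    obtain ⟨k, hk⟩ := Finset.card_eq_one.mp h
    refine ⟨k, ?_⟩
    funext j
    by_cases hjk : j = k
    · subst hjk
      have : j ∈ Finset.univ.filter (fun i => x i ≠ y i) := by
        rw [hk]; exact Finset.mem_singleton_self j
      have hne : x j ≠ y j := (Finset.mem_filter.mp this).2
      rw [flipv_apply_self, ← (fin2_ne_iff _ _).mp hne]
    · have : j ∉ Finset.univ.filter (fun i => x i ≠ y i) := by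
        rw [hk]; simp [hjk]
      have heq : x j = y j := by
        by_contra hne
        exact this (Finset.mem_filter.mpr ⟨Finset.mem_univ j, hne⟩)
      rw [flipv_apply_ne x hjk, heq]
  · rintro ⟨k, _, rfl⟩
    exact hamming_flipv x k

lemma wS_flipv {D : ℕ} (S : Finset (Fin D)) (x : Vx D) (k : Fin D) :
    wS S (flipv x k) = (if k ∈ S then (-1 : ℝ) else 1) * wS S x := by
  rw [wS_eq, wS_eq]
  rw [Fintype.prod_eq_mul_prod_compl k (fun j => fS S j (flipv x k j))]
  rw [Fintype.prod_eq_mul_prod_compl k (fun j => fS S j (x j))]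
  have hcompl : ∏ j ∈ {k}ᶜ, fS S j (flipv x k j) = ∏ j ∈ {k}ᶜ, fS S j (x j) := by
    refine Finset.prod_congr rfl fun j hj => ?_
    rw [flipv_apply_ne x (Finset.mem_compl.mp hj |> fun h => by simpa using h)]
  rw [hcompl, flipv_apply_self, ← mul_assoc]
  congr 1
  have hu : ∀ a : Fin 2, uvec (a + 1) = uvec a := by
    intro a; fin_cases a <;> simp [uvec]
  have hv : ∀ a : Fin 2, vvec (a + 1) = -vvec a := by
    intro a; fin_cases a <;> simp [vvec]
  by_cases hk : k ∈ S
  · simp [fS, hk, hv]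
  · simp [fS, hk, hu]

/-- `w_S` is an eigenvector for eigenvalue `D - 2|S|`. -/
lemma mulVec_wS {D : ℕ} (S : Finset (Fin D)) :
    (adjA D) *ᵥ wS S = ((D : ℝ) - 2 * S.card) • wS S := by
  funext x
  have h1 : ((adjA D) *ᵥ wS S) x = ∑ y, (if hamming x y = 1 then (1:ℝ) else 0) * wS S y := by
    simp [Matrix.mulVec, dotProduct, adjA]
  rw [h1]
  have h2 : ∑ y, (if hamming x y = 1 then (1:ℝ) else 0) * wS S y
      = ∑ y ∈ Finset.univ.filter (fun y => hamming x y = 1), wS S y := by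
    rw [Finset.sum_filter]
    exact Finset.sum_congr rfl fun y _ => by rw [ite_mul, one_mul, zero_mul]
  rw [h2, filter_hamming_eq, Finset.sum_image (fun k _ k' _ h => flipv_injective x h)]
  have h3 : ∑ k : Fin D, wS S (flipv x k)
      = (∑ k : Fin D, if k ∈ S then (-1:ℝ) else 1) * wS S x := by
    rw [Finset.sum_mul]
    exact Finset.sum_congr rfl fun k _ => wS_flipv S x k
  rw [h3]
  have h4 : (∑ k : Fin D, if k ∈ S then (-1:ℝ) else 1) = (D : ℝ) - 2 * S.card := by
    rw [Finset.sum_ite, Finset.sum_const, Finset.sum_const]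
    have e1 : Finset.univ.filter (fun k => k ∈ S) = S := by simp
    have e2 : Finset.univ.filter (fun k => k ∉ S) = Sᶜ := by
      ext k; simp
    rw [e1, e2, Finset.card_compl, Fintype.card_fin]
    have hle : S.card ≤ D := by
      simpa using Finset.card_le_card (Finset.subset_univ S)
    rw [nsmul_eq_mul, nsmul_eq_mul, Nat.cast_sub hle]
    push_cast
    ring
  rw [h4]
  rw [Pi.smul_apply, smul_eq_mul]

/-- The full family `w_S` is linearly independent. -/
lemma wS_li (D : ℕ) : LinearIndependent ℝ (wS (D := D)) := by
  rw [Fintype.linearIndependent_iff]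
  intro g hg T
  have key : ∑ S : Finset (Fin D), g S * (if S = T then (1:ℝ) else 0) = 0 := by
    calc ∑ S : Finset (Fin D), g S * (if S = T then (1:ℝ) else 0)
        = ∑ S : Finset (Fin D), g S * (∑ x, wS S x * wS T x) := by
          refine Finset.sum_congr rfl fun S _ => by rw [wS_dot]
      _ = ∑ S : Finset (Fin D), ∑ x, g S * wS S x * wS T x := by
          refine Finset.sum_congr rfl fun S _ => by rw [Finset.mul_sum]; ring_nf
      _ = ∑ x, (∑ S : Finset (Fin D), g S • wS S) x * wS T x := by
          rw [Finset.sum_comm]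
          refine Finset.sum_congr rfl fun x _ => ?_
          rw [Finset.sum_apply, Finset.sum_mul]
          rfl
      _ = 0 := by rw [hg]; simp
  simpa using key

theorem eigenspace_basis (D : ℕ) (hD : 0 < D) (i : ℕ) (hi : i ≤ D) :
    Module.finrank ℝ
        (Module.End.eigenspace (Matrix.mulVecLin (adjA D)) ((D : ℝ) - 2 * i)) = D.choose i ∧
    LinearIndependent ℝ (fun S : {S : Finset (Fin D) // S.card = i} => wS S.1) ∧
    Submodule.span ℝ (wS '' {S : Finset (Fin D) | S.card = i}) =
      Module.End.eigenspace (Matrix.mulVecLin (adjA D)) ((D : ℝ) - 2 * i) := by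
  set μ : ℝ := (D : ℝ) - 2 * i with hμ
  have li_full := wS_li D
  have li_sub : LinearIndependent ℝ (fun S : {S : Finset (Fin D) // S.card = i} => wS S.1) :=
    li_full.comp Subtype.val Subtype.val_injective
  have card_eq : Fintype.card (Finset (Fin D)) = Module.finrank ℝ (Vx D → ℝ) := by
    rw [Module.finrank_fintype_fun_eq_card]
    simp [Fintype.card_finset]
  have htop : Submodule.span ℝ (Set.range (wS (D := D))) = ⊤ :=
    li_full.span_eq_top_of_card_eq_finrank card_eq
  -- membership of eigenvectors
  have hmem : ∀ S : Finset (Fin D), S.card = i →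
      wS S ∈ Module.End.eigenspace (Matrix.mulVecLin (adjA D)) μ := by
    intro S hS
    rw [Module.End.mem_eigenspace_iff, Matrix.mulVecLin_apply, mulVec_wS, hS]
  have hrange : Set.range (fun S : {S : Finset (Fin D) // S.card = i} => wS S.1)
      = wS '' {S : Finset (Fin D) | S.card = i} := by
    ext w
    constructor
    · rintro ⟨⟨S, hS⟩, rfl⟩; exact ⟨S, hS, rfl⟩
    · rintro ⟨S, hS, rfl⟩; exact ⟨⟨S, hS⟩, rfl⟩
  -- span ≤ eigenspace
  have hle : Submodule.span ℝ (wS '' {S : Finset (Fin D) | S.card = i})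
      ≤ Module.End.eigenspace (Matrix.mulVecLin (adjA D)) μ := by
    rw [Submodule.span_le]
    rintro w ⟨S, hS, rfl⟩
    exact hmem S hS
  -- eigenspace ≤ span
  let b : Module.Basis (Finset (Fin D)) ℝ (Vx D → ℝ) := Module.Basis.mk li_full htop.ge
  have hb : ∀ S, b S = wS S := fun S => by rw [Module.Basis.mk_apply]
  have hge : Module.End.eigenspace (Matrix.mulVecLin (adjA D)) μ
      ≤ Submodule.span ℝ (wS '' {S : Finset (Fin D) | S.card = i}) := by
    intro v hv
    rw [Module.End.mem_eigenspace_iff] at hv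
    -- decompose v
    have hrepr : ∑ S : Finset (Fin D), b.repr v S • wS S = v := by
      have := b.sum_repr v
      simpa only [hb] using this
    have hA1 : (adjA D).mulVecLin v
        = ∑ S : Finset (Fin D), (b.repr v S * ((D : ℝ) - 2 * S.card)) • wS S := by
      conv_lhs => rw [← hrepr]
      rw [map_sum]
      refine Finset.sum_congr rfl fun S _ => ?_
      rw [_root_.map_smul, Matrix.mulVecLin_apply, mulVec_wS, smul_smul]
    have hA2 : μ • v = ∑ S : Finset (Fin D), (μ * b.repr v S) • wS S := by
      conv_lhs => rw [← hrepr]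
      rw [Finset.smul_sum]
      refine Finset.sum_congr rfl fun S _ => ?_
      rw [smul_smul]
    have hAv : ∑ S : Finset (Fin D), (b.repr v S * ((D : ℝ) - 2 * S.card)) • wS S
        = ∑ S : Finset (Fin D), (μ * b.repr v S) • wS S := by
      rw [← hA1, ← hA2, hv]
    have hcoef : ∀ S : Finset (Fin D), S.card ≠ i → b.repr v S = 0 := by
      intro S hS
      have hz : ∑ S : Finset (Fin D),
          (b.repr v S * ((D : ℝ) - 2 * S.card) - μ * b.repr v S) • wS S = 0 := by
        simp only [sub_smul]
        rw [Finset.sum_sub_distrib, hAv, sub_self]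
      have := (Fintype.linearIndependent_iff.mp li_full) _ hz S
      have hne : ((D : ℝ) - 2 * S.card) - μ ≠ 0 := by
        rw [hμ]
        have hci : (S.card : ℝ) ≠ (i : ℝ) := by exact_mod_cast hS
        intro hcon
        apply hci
        linarith
      have hmul : b.repr v S * (((D : ℝ) - 2 * S.card) - μ) = 0 := by
        linear_combination this
      rcases mul_eq_zero.mp hmul with h | h
      · exact h
      · exact absurd h hne
    have hv2 : v = ∑ S ∈ Finset.univ.filter (fun S : Finset (Fin D) => S.card = i),
        b.repr v S • wS S := by
      conv_lhs => rw [← hrepr]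
      rw [Finset.sum_filter]
      refine Finset.sum_congr rfl fun S _ => ?_
      by_cases hS : S.card = i
      · rw [if_pos hS]
      · rw [if_neg hS, hcoef S hS, zero_smul]
    rw [hv2]
    refine Submodule.sum_mem _ fun S hS => ?_
    refine Submodule.smul_mem _ _ (Submodule.subset_span ?_)
    exact ⟨S, (Finset.mem_filter.mp hS).2, rfl⟩
  have hspan_eq : Submodule.span ℝ (wS '' {S : Finset (Fin D) | S.card = i})
      = Module.End.eigenspace (Matrix.mulVecLin (adjA D)) μ := le_antisymm hle hge
  refine ⟨?_, li_sub, hspan_eq⟩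
  rw [← hspan_eq, ← hrange, finrank_span_eq_card li_sub]
  rw [Fintype.card_finset_len, Fintype.card_fin]
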